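/- For a nonpositive shift s ≤ 0, the shifted multinomial satisfies N^{(s)}_{k,l} = Σ C(n_1+...+n_r−1, n_1−1)·C(n_2+...+n_r−1, n_2−1)···C(n_{−s−1}+...+n_r−1, n_{−s−1}−1)·multinomial(n_{−s}+...+n_r−1; n_{−s}−1, n_{−s+1}, ..., n_r), summed over ordered compositions (k,l)=(k_1,l_1)+...+(k_r,l_r) with r ≥ −s, all k_i,l_i ≥ 1, and n_i = k_i+l_i. -/

import Mathlib

open Finset Nat

private lemma subset_sup {β α : Type*} [DecidableEq α] {s : Finset β} {f : β → Finset α}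
    {b : β} (hb : b ∈ s) : f b ⊆ s.sup f :=
  fun x hx => Finset.mem_sup.2 ⟨b, hb, hx⟩

private lemma natCard_sigma {ι : Type*} [Fintype ι] (g : ι → Type*) [∀ i, Finite (g i)] :
    Nat.card (Σ i, g i) = ∑ i, Nat.card (g i) := by
  classical
  letI : ∀ i, Fintype (g i) := fun i => Fintype.ofFinite _
  rw [Nat.card_eq_fintype_card, Fintype.card_sigma]
  exact Finset.sum_congr rfl fun i _ => (Nat.card_eq_fintype_card).symm

private lemma multinomial_univ_succ (r : ℕ) (n : Fin (r + 1) → ℕ) :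
    Nat.multinomial Finset.univ n =
      (∑ i, n i).choose (n 0) * Nat.multinomial Finset.univ (n ∘ Fin.succ) := by
  have h1 : (∏ i, (n i).factorial) *
      ((∑ i, n i).choose (n 0) * Nat.multinomial Finset.univ (n ∘ Fin.succ))
      = (∑ i, n i).factorial := by
    rw [Fin.prod_univ_succ]
    have hspec := Nat.multinomial_spec Finset.univ (n ∘ Fin.succ)
    calc (n 0).factorial * (∏ i : Fin r, (n i.succ).factorial) *
          ((∑ i, n i).choose (n 0) * Nat.multinomial Finset.univ (n ∘ Fin.succ))
        = (∑ i, n i).choose (n 0) * (n 0).factorial *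
            ((∏ i : Fin r, ((n ∘ Fin.succ) i).factorial) *
              Nat.multinomial Finset.univ (n ∘ Fin.succ)) := by
          simp only [Function.comp_apply]; ring
      _ = (∑ i, n i).choose (n 0) * (n 0).factorial * (∑ i : Fin r, n i.succ).factorial := by
          rw [hspec]; simp [Function.comp]
      _ = (∑ i, n i).factorial := by
          rw [Fin.sum_univ_succ, Nat.choose_symm_add, Nat.add_choose_mul_factorial_mul_factorial]
  have h2 := Nat.multinomial_spec Finset.univ n
  exact Nat.eq_of_mul_eq_mul_left (Finset.prod_pos fun i _ => Nat.factorial_pos _)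
    (h2.trans h1.symm)

/-- The number of ordered partitions of a finset `S` into `r` parts of prescribed sizes. -/
private lemma card_sizedPartitions {α : Type*} [Fintype α] [DecidableEq α] :
    ∀ (r : ℕ) (S : Finset α) (n : Fin r → ℕ), ∑ i, n i = S.card →
      Nat.card {h : Fin r → Finset α //
        (∀ i, (h i).card = n i) ∧ (∀ i j, i ≠ j → Disjoint (h i) (h j)) ∧
        Finset.univ.sup h = S} = Nat.multinomial Finset.univ n := by
  intro r
  induction r with
  | zero =>
    intro S n hsum
    have hS : S = ∅ := by
      rw [← Finset.card_eq_zero, ← hsum]; simp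
    subst hS
    have : Unique {h : Fin 0 → Finset α //
        (∀ i, (h i).card = n i) ∧ (∀ i j, i ≠ j → Disjoint (h i) (h j)) ∧
        Finset.univ.sup h = ∅} := by
      refine ⟨⟨⟨fun i => i.elim0, fun i => i.elim0, fun i => i.elim0, by simp⟩⟩, ?_⟩
      rintro ⟨h, -⟩
      exact Subtype.ext (funext fun i => i.elim0)
    rw [Nat.card_unique]
    rw [show (Finset.univ : Finset (Fin 0)) = ∅ from rfl, Nat.multinomial_empty]
  | succ r ih =>
    intro S n hsum
    let Fib := fun (S₀ : {T : Finset α // T ⊆ S ∧ T.card = n 0}) =>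
      {h : Fin r → Finset α //
        (∀ i, (h i).card = n (Fin.succ i)) ∧ (∀ i j, i ≠ j → Disjoint (h i) (h j)) ∧
        Finset.univ.sup h = S \ S₀.val}
    have E : {h : Fin (r+1) → Finset α //
        (∀ i, (h i).card = n i) ∧ (∀ i j, i ≠ j → Disjoint (h i) (h j)) ∧
        Finset.univ.sup h = S} ≃ Σ S₀, Fib S₀ := by
      refine { toFun := fun h => ⟨⟨h.val 0, ?_, h.2.1 0⟩, ⟨h.val ∘ Fin.succ, ?_⟩⟩,
               invFun := fun p => ⟨Fin.cons p.1.val p.2.val, ?_⟩,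
               left_inv := ?_, right_inv := ?_ }
      · -- h 0 ⊆ S
        obtain ⟨h, hc, hd, hs⟩ := h
        have := subset_sup (f := h) (Finset.mem_univ 0)
        rwa [hs] at this
      · -- tail conditions
        obtain ⟨h, hc, hd, hs⟩ := h
        refine ⟨fun i => hc _, fun i j hij => hd _ _ (by simpa [Fin.succ_inj] using hij), ?_⟩
        apply Finset.ext
        intro x
        simp only [Finset.mem_sdiff, Finset.mem_sup, Finset.mem_univ, true_and,
          Function.comp_apply]
        constructor
        · rintro ⟨i, hx⟩
          refine ⟨?_, fun hx0 => Finset.disjoint_left.1 (hd i.succ 0 (Fin.succ_ne_zero i)) hx hx0⟩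
          have := subset_sup (f := h) (Finset.mem_univ i.succ) hx
          rwa [hs] at this
        · rintro ⟨hxS, hx0⟩
          rw [← hs, Finset.mem_sup] at hxS
          obtain ⟨i, -, hx⟩ := hxS
          rcases Fin.eq_zero_or_eq_succ i with rfl | ⟨j, rfl⟩
          · exact absurd hx hx0
          · exact ⟨j, hx⟩
      · -- cons conditions
        obtain ⟨⟨S₀, hS₀sub, hS₀card⟩, ⟨h, hc, hd, hs⟩⟩ := p
        have key : ∀ m : Fin r, Disjoint S₀ (h m) := by
          intro m
          have hsub : h m ⊆ S \ S₀ := by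
            have := subset_sup (f := h) (Finset.mem_univ m)
            rwa [hs] at this
          exact Finset.disjoint_left.2 fun x hx1 hx2 =>
            (Finset.mem_sdiff.1 (hsub hx2)).2 hx1
        refine ⟨fun i => ?_, fun i j hij => ?_, ?_⟩
        · rcases Fin.eq_zero_or_eq_succ i with rfl | ⟨j, rfl⟩
          · simpa using hS₀card
          · simpa using hc j
        · rcases Fin.eq_zero_or_eq_succ i with rfl | ⟨i', rfl⟩ <;>
            rcases Fin.eq_zero_or_eq_succ j with rfl | ⟨j', rfl⟩
          · exact absurd rfl hij
          · simpa using key j'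
          · simpa using (key i').symm
          · simpa using hd i' j' (by simpa [Fin.succ_inj] using hij)
        · apply Finset.ext
          intro x
          simp only [Finset.mem_sup, Finset.mem_univ, true_and]
          constructor
          · rintro ⟨i, hx⟩
            rcases Fin.eq_zero_or_eq_succ i with rfl | ⟨j, rfl⟩
            · exact hS₀sub (by simpa using hx)
            · have : x ∈ S \ S₀ := by
                rw [← hs]
                exact Finset.mem_sup.2 ⟨j, Finset.mem_univ j, by simpa using hx⟩
              exact (Finset.mem_sdiff.1 this).1
          · intro hxS
            by_cases hx0 : x ∈ S₀
            · exact ⟨0, by simpa using hx0⟩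
            · have : x ∈ S \ S₀ := Finset.mem_sdiff.2 ⟨hxS, hx0⟩
              rw [← hs, Finset.mem_sup] at this
              obtain ⟨j, -, hx⟩ := this
              exact ⟨j.succ, by simpa using hx⟩
      · -- left inverse
        rintro ⟨h, hp⟩
        exact Subtype.ext (funext fun i => by
          rcases Fin.eq_zero_or_eq_succ i with rfl | ⟨j, rfl⟩ <;> simp)
      · -- right inverse
        rintro ⟨S₀, h⟩
        rfl
    rw [Nat.card_congr E]
    have hfib : ∀ S₀, Nat.card (Fib S₀) = Nat.multinomial Finset.univ (n ∘ Fin.succ) := by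
      rintro ⟨S₀, hsub, hcard⟩
      apply ih
      show ∑ i : Fin r, n i.succ = (S \ S₀).card
      have h1 : S₀.card ≤ S.card := Finset.card_le_card hsub
      have h2 : (S \ S₀).card = S.card - S₀.card := Finset.card_sdiff_of_subset hsub
      have h3 : n 0 + ∑ i : Fin r, n i.succ = S.card := by
        rw [← Fin.sum_univ_succ]; exact hsum
      omega
    rw [natCard_sigma]
    have hcardsub : Fintype.card {T : Finset α // T ⊆ S ∧ T.card = n 0} = S.card.choose (n 0) := by
      rw [Fintype.card_subtype]
      rw [show Finset.filter (fun T => T ⊆ S ∧ T.card = n 0) Finset.univ = S.powersetCard (n 0) by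
        ext T; simp [Finset.mem_powersetCard]]
      exact Finset.card_powersetCard _ _
    calc ∑ S₀ : {T : Finset α // T ⊆ S ∧ T.card = n 0}, Nat.card (Fib S₀)
        = ∑ _S₀ : {T : Finset α // T ⊆ S ∧ T.card = n 0},
            Nat.multinomial Finset.univ (n ∘ Fin.succ) := by
          exact Finset.sum_congr rfl fun S₀ _ => hfib S₀
      _ = S.card.choose (n 0) * Nat.multinomial Finset.univ (n ∘ Fin.succ) := by
          rw [Finset.sum_const, Finset.card_univ, hcardsub, smul_eq_mul]
      _ = Nat.multinomial Finset.univ n := by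
          rw [multinomial_univ_succ, hsum]

private lemma multinomial_pascal {s : Finset ℕ} {n : ℕ → ℕ} (hs : s.Nonempty)
    (hn : ∀ i ∈ s, 1 ≤ n i) :
    Nat.multinomial s n =
      ∑ a ∈ s, ((∑ j ∈ s, n j) - 1).choose (n a - 1) * Nat.multinomial (s.erase a) n := by
  have hP : 0 < ∏ i ∈ s, (n i).factorial := Finset.prod_pos fun i _ => Nat.factorial_pos _
  apply Nat.eq_of_mul_eq_mul_left hP
  rw [Nat.multinomial_spec, Finset.mul_sum]
  have hsum1 : 1 ≤ ∑ j ∈ s, n j := by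
    obtain ⟨a, ha⟩ := hs
    exact le_trans (hn a ha) (Finset.single_le_sum (fun i _ => Nat.zero_le _) ha)
  have hterm : ∀ a ∈ s, (∏ i ∈ s, (n i).factorial) *
      (((∑ j ∈ s, n j) - 1).choose (n a - 1) * Nat.multinomial (s.erase a) n)
      = n a * ((∑ j ∈ s, n j) - 1).factorial := by
    intro a ha
    have hP' : (∏ i ∈ s, (n i).factorial)
        = n a * ((n a - 1).factorial * ∏ i ∈ s.erase a, (n i).factorial) := by
      rw [← Finset.mul_prod_erase s _ ha, ← mul_assoc, Nat.mul_factorial_pred (Nat.pos_iff_ne_zero.mp (hn a ha))]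
    have hAB : (∑ j ∈ s, n j) - 1 = (n a - 1) + ∑ j ∈ s.erase a, n j := by
      have := Finset.add_sum_erase s n ha
      have h1 := hn a ha
      omega
    rw [hP', hAB]
    calc n a * ((n a - 1).factorial * ∏ i ∈ s.erase a, (n i).factorial) *
          (((n a - 1) + ∑ j ∈ s.erase a, n j).choose (n a - 1) * Nat.multinomial (s.erase a) n)
        = n a * (((n a - 1) + ∑ j ∈ s.erase a, n j).choose (n a - 1) * (n a - 1).factorial *
            ((∏ i ∈ s.erase a, (n i).factorial) * Nat.multinomial (s.erase a) n)) := by ring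
      _ = n a * (((n a - 1) + ∑ j ∈ s.erase a, n j).choose (n a - 1) * (n a - 1).factorial *
            (∑ j ∈ s.erase a, n j).factorial) := by rw [Nat.multinomial_spec]
      _ = n a * ((n a - 1) + ∑ j ∈ s.erase a, n j).factorial := by
          rw [Nat.choose_symm_add, Nat.add_choose_mul_factorial_mul_factorial]
  symm
  calc ∑ a ∈ s, (∏ i ∈ s, (n i).factorial) *
        (((∑ j ∈ s, n j) - 1).choose (n a - 1) * Nat.multinomial (s.erase a) n)
      = ∑ a ∈ s, n a * ((∑ j ∈ s, n j) - 1).factorial := Finset.sum_congr rfl hterm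
    _ = (∑ j ∈ s, n j) * ((∑ j ∈ s, n j) - 1).factorial := by rw [← Finset.sum_mul]
    _ = (∑ j ∈ s, n j).factorial := by
        have : (∑ j ∈ s, n j) = ((∑ j ∈ s, n j) - 1) + 1 := by omega
        rw [this, Nat.factorial_succ]
        simp

/-- A cleaned-up version of `compTerm` using `Nat.multinomial`. -/
private def cleanTerm (r : ℕ) (n : ℕ → ℕ) (t : ℕ) : ℕ :=
  (∏ i ∈ Finset.range t, ((∑ j ∈ Finset.Ico i r, n j) - 1).choose (n i - 1)) *
    Nat.multinomial (Finset.Ico t r) n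


/-- The fundamental `r`-part multinomial `N^{[r]}_{k,l}`: the number of unordered
partitions of `{1,…,k+l}` into `r` bicolored sets, each carrying a number of reds
`kᵢ ≥ 1` with `lᵢ = |Sᵢ| - kᵢ ≥ 1`, with `Σ kᵢ = k` (hence `Σ lᵢ = l`).  A partition is
recorded as a finset of pairs `(Sᵢ, kᵢ)`. -/
noncomputable def Nfund (k l r : ℕ) : ℕ :=
  Nat.card {P : Finset (Finset (Fin (k + l)) × ℕ) //
    P.card = r ∧
    (∀ p ∈ P, 1 ≤ p.2 ∧ p.2 < p.1.card) ∧
    (P : Set (Finset (Fin (k + l)) × ℕ)).Pairwise (fun p q => Disjoint p.1 q.1) ∧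
    P.sup Prod.fst = Finset.univ ∧
    ∑ p ∈ P, p.2 = k}


/-- The shifted multinomial `N^{(s)}_{k,l} = Σ_{r ≥ max(-s,1)} (r+s)! · N^{[r]}_{k,l}`,
with `(r+s)!` interpreted as `0` when `r + s < 0`.  (All terms with `r > k + l`
vanish.) -/
noncomputable def Nshift (k l : ℕ) (s : ℤ) : ℕ :=
  ∑ r ∈ Finset.Icc 1 (k + l),
    (if 0 ≤ (r : ℤ) + s then ((r : ℤ) + s).toNat.factorial else 0) * Nfund k l r

/-- The summand attached to an ordered composition with part sizes `n 0, …, n (r-1)` and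
`t = -s` leading binomial shifts: the product
`C(n₁+…+n_r-1, n₁-1) ⋯ C(n_{t-1}+…+n_r-1, n_{t-1}-1) ·
  multinomial(n_t+…+n_r-1; n_t-1, n_{t+1}, …, n_r)`
(1-indexed as in the paper; for `t = 0` it is the plain multinomial
`multinomial(n₁+…+n_r; n₁, …, n_r)`). -/
def compTerm (r : ℕ) (n : ℕ → ℕ) (t : ℕ) : ℕ :=
  if t = 0 then
    (∑ j ∈ Finset.range r, n j).factorial / ∏ j ∈ Finset.range r, (n j).factorial
  else
    (∏ i ∈ Finset.range (t - 1),
        Nat.choose ((∑ j ∈ Finset.Ico i r, n j) - 1) (n i - 1)) *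
      (((∑ j ∈ Finset.Ico (t - 1) r, n j) - 1).factorial /
        ((n (t - 1) - 1).factorial * ∏ j ∈ Finset.Ico t r, (n j).factorial))

private lemma compTerm_eq_cleanTerm (r t : ℕ) (n : ℕ → ℕ) (hn : ∀ i < r, 1 ≤ n i)
    (ht : t ≤ r) : compTerm r n t = cleanTerm r n t := by
  cases t with
  | zero =>
    unfold compTerm cleanTerm
    rw [if_pos rfl]
    simp only [Finset.range_zero, Finset.prod_empty, one_mul]
    rw [Nat.multinomial, ← Finset.range_eq_Ico]
  | succ u =>
    have hur : u < r := ht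
    have hmem : u ∈ Finset.Ico u r := Finset.mem_Ico.2 ⟨le_refl u, hur⟩
    have hsd : Finset.Ico u r \ {u} = Finset.Ico (u + 1) r := by
      ext x; simp only [Finset.mem_sdiff, Finset.mem_Ico, Finset.mem_singleton]; omega
    have hinsert : insert u (Finset.Ico (u + 1) r) = Finset.Ico u r := by
      ext x; simp only [Finset.mem_insert, Finset.mem_Ico]; omega
    have hnotmem : u ∉ Finset.Ico (u + 1) r := by simp
    set m : ℕ → ℕ := Function.update n u (n u - 1) with hm
    have hsplit : ∑ j ∈ Finset.Ico u r, n j = n u + ∑ j ∈ Finset.Ico (u + 1) r, n j := by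
      rw [← hinsert, Finset.sum_insert hnotmem]
    have hnu := hn u hur
    have claim1 : ((∑ j ∈ Finset.Ico u r, n j) - 1).factorial /
        ((n u - 1).factorial * ∏ j ∈ Finset.Ico (u + 1) r, (n j).factorial)
        = Nat.multinomial (Finset.Ico u r) m := by
      rw [Nat.multinomial]
      congr 1
      · congr 1
        rw [Finset.sum_update_of_mem hmem, hsd]
        omega
      · rw [← Finset.mul_prod_erase _ _ hmem, Finset.erase_eq, hsd]
        congr 1
        · rw [hm, Function.update_self]
        · exact Finset.prod_congr rfl fun i hi => by
            rw [hm, Function.update_of_ne (ne_of_mem_of_not_mem hi hnotmem)]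
    have claim2 : Nat.multinomial (Finset.Ico u r) m =
        ((∑ j ∈ Finset.Ico u r, n j) - 1).choose (n u - 1) *
          Nat.multinomial (Finset.Ico (u + 1) r) n := by
      rw [← hinsert, Nat.multinomial_insert hnotmem]
      congr 1
      · rw [hm]
        rw [Function.update_self]
        have hms : ∑ i ∈ Finset.Ico (u + 1) r, Function.update n u (n u - 1) i
            = ∑ j ∈ Finset.Ico (u + 1) r, n j :=
          Finset.sum_congr rfl fun i hi =>
            Function.update_of_ne (ne_of_mem_of_not_mem hi hnotmem) _ _
        rw [hms, Finset.sum_insert hnotmem]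
        congr 1
        omega
      · exact Nat.multinomial_congr fun i hi =>
          Function.update_of_ne (ne_of_mem_of_not_mem hi hnotmem) _ _
    have hct : compTerm r n (u + 1) =
        (∏ i ∈ Finset.range u, ((∑ j ∈ Finset.Ico i r, n j) - 1).choose (n i - 1)) *
          (((∑ j ∈ Finset.Ico u r, n j) - 1).factorial /
            ((n u - 1).factorial * ∏ j ∈ Finset.Ico (u + 1) r, (n j).factorial)) := by
      unfold compTerm
      rw [if_neg (Nat.succ_ne_zero u), Nat.succ_sub_one]
    rw [hct, claim1, claim2, cleanTerm, Finset.prod_range_succ]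
    ring

private def PT (k l r : ℕ) :=
  {P : Finset (Finset (Fin (k + l)) × ℕ) //
    P.card = r ∧
    (∀ p ∈ P, 1 ≤ p.2 ∧ p.2 < p.1.card) ∧
    (P : Set (Finset (Fin (k + l)) × ℕ)).Pairwise (fun p q => Disjoint p.1 q.1) ∧
    P.sup Prod.fst = Finset.univ ∧
    ∑ p ∈ P, p.2 = k}

private lemma Nfund_eq_card_PT (k l r : ℕ) : Nfund k l r = Nat.card (PT k l r) := rfl

private def OT (k l r : ℕ) :=
  {g : Fin r → Finset (Fin (k + l)) × ℕ //
    (∀ i, 1 ≤ (g i).2 ∧ (g i).2 < (g i).1.card) ∧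
    (∀ i j, i ≠ j → Disjoint (g i).1 (g j).1) ∧
    Finset.univ.sup (fun i => (g i).1) = Finset.univ ∧
    ∑ i, (g i).2 = k}

private lemma card_le_kl {k l : ℕ} (S : Finset (Fin (k + l))) : S.card ≤ k + l := by
  simpa using Finset.card_le_univ S

private instance OT_finite (k l r : ℕ) : Finite (OT k l r) := by
  apply Finite.of_injective (fun g : OT k l r => fun i : Fin r =>
    (((g.val i).1 : Finset (Fin (k + l))),
      (⟨min (g.val i).2 (k + l), Nat.lt_succ_of_le (min_le_right _ _)⟩ : Fin (k + l + 1))))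
  intro g₁ g₂ h
  have hval : ∀ (g : OT k l r) (i : Fin r), min (g.val i).2 (k + l) = (g.val i).2 := by
    intro g i
    exact min_eq_left (le_trans (le_of_lt (g.prop.1 i).2) (card_le_kl _))
  apply Subtype.ext
  funext i
  have hi := congrFun h i
  rw [Prod.mk.injEq] at hi
  apply Prod.ext hi.1
  have := congrArg Fin.val hi.2
  simpa [hval g₁ i, hval g₂ i] using this

private instance PT_finite (k l r : ℕ) : Finite (PT k l r) := by
  apply Finite.of_injective (fun P : PT k l r =>
    (⟨P.val.image (fun p => (p.1, (⟨min p.2 (k + l), Nat.lt_succ_of_le (min_le_right _ _)⟩ :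
        Fin (k + l + 1)))), trivial⟩ :
      {Q : Finset (Finset (Fin (k + l)) × Fin (k + l + 1)) // True}))
  intro P₁ P₂ h
  have himg : ∀ P : PT k l r, (P.val.image (fun p => (p.1,
      (⟨min p.2 (k + l), Nat.lt_succ_of_le (min_le_right _ _)⟩ : Fin (k + l + 1))))).image
        (fun q => (q.1, (q.2 : ℕ))) = P.val := by
    intro P
    rw [Finset.image_image]
    apply Finset.ext
    intro p
    constructor
    · intro hp
      rw [Finset.mem_image] at hp
      obtain ⟨q, hq, hqe⟩ := hp
      have hmin : min q.2 (k + l) = q.2 :=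
        min_eq_left (le_trans (le_of_lt (P.prop.2.1 q hq).2) (card_le_kl _))
      simpa [Function.comp, hmin, Prod.ext_iff] using hqe ▸ (by
        have : ((fun q => (q.1, (q.2 : ℕ))) ∘ (fun p : Finset (Fin (k+l)) × ℕ => (p.1,
            (⟨min p.2 (k + l), Nat.lt_succ_of_le (min_le_right _ _)⟩ : Fin (k + l + 1))))) q
            = (q.1, min q.2 (k+l)) := rfl
        rw [hmin] at this
        exact this ▸ hq)
    · intro hp
      rw [Finset.mem_image]
      refine ⟨p, hp, ?_⟩
      have hmin : min p.2 (k + l) = p.2 :=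
        min_eq_left (le_trans (le_of_lt (P.prop.2.1 p hp).2) (card_le_kl _))
      simp [Function.comp, hmin]
  have := congrArg (fun Q => Finset.image (fun q : Finset (Fin (k+l)) × Fin (k+l+1) =>
    (q.1, (q.2 : ℕ))) Q.val) h
  simp only at this
  exact Subtype.ext ((himg P₁).symm.trans (this.trans (himg P₂)))

private lemma OT_val_injective {k l r : ℕ} (g : OT k l r) : Function.Injective g.val := by
  intro i j hij
  by_contra hne
  have hdisj := g.prop.2.1 i j hne
  rw [hij] at hdisj
  have hcard : (g.val j).1 = ⊥ := disjoint_self.1 hdisj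
  have h1 := (g.prop.1 j).1
  have h2 := (g.prop.1 j).2
  rw [hcard] at h2
  simp at h2

private def OTtoPT (k l r : ℕ) (g : OT k l r) : PT k l r := by
  refine ⟨Finset.univ.image g.val, ?_, ?_, ?_, ?_, ?_⟩
  · rw [Finset.card_image_of_injective _ (OT_val_injective g), Finset.card_univ,
      Fintype.card_fin]
  · intro p hp
    rw [Finset.mem_image] at hp
    obtain ⟨i, -, rfl⟩ := hp
    exact g.prop.1 i
  · intro p hp q hq hpq
    rw [Finset.mem_coe, Finset.mem_image] at hp hq
    obtain ⟨i, -, rfl⟩ := hp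
    obtain ⟨j, -, rfl⟩ := hq
    exact g.prop.2.1 i j (fun h => hpq (h ▸ rfl))
  · rw [Finset.sup_image]
    exact g.prop.2.2.1
  · rw [Finset.sum_image (fun i _ j _ h => OT_val_injective g h)]
    exact g.prop.2.2.2

private noncomputable def fibFwd (k l r : ℕ) (P : PT k l r) (g : {g : OT k l r // OTtoPT k l r g = P}) :
    Fin r ≃ {x // x ∈ P.val} :=
  Equiv.ofBijective (fun i => ⟨g.val.val i, by
      have := congrArg Subtype.val g.prop
      rw [← this]
      exact Finset.mem_image_of_mem _ (Finset.mem_univ i)⟩) (by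
    rw [Fintype.bijective_iff_injective_and_card]
    exact ⟨fun i j h => OT_val_injective g.val (congrArg Subtype.val h), by
      rw [Fintype.card_coe, P.prop.1, Fintype.card_fin]⟩)

private noncomputable def fibInv (k l r : ℕ) (P : PT k l r) (e : Fin r ≃ {x // x ∈ P.val}) :
    {g : OT k l r // OTtoPT k l r g = P} := by
  refine ⟨⟨fun i => (e i).val, ?_, ?_, ?_, ?_⟩, ?_⟩
  · intro i
    exact P.prop.2.1 _ (e i).prop
  · intro i j hij
    refine P.prop.2.2.1 (e i).prop (e j).prop ?_
    exact fun h => hij (e.injective (Subtype.ext h))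
  · refine Finset.Subset.antisymm (Finset.subset_univ _) ?_
    intro x hx
    have hx2 : x ∈ P.val.sup Prod.fst := by rw [P.prop.2.2.2.1]; exact hx
    rw [Finset.mem_sup] at hx2
    obtain ⟨p, hp, hxp⟩ := hx2
    exact Finset.mem_sup.2 ⟨e.symm ⟨p, hp⟩, Finset.mem_univ _, by simpa using hxp⟩
  · have h1 : ∑ i : Fin r, ((e i).val).2 = ∑ x : {x // x ∈ P.val}, (x.val).2 :=
      Equiv.sum_comp e (fun x => (x.val).2)
    rw [h1, Finset.sum_coe_sort P.val (fun p => p.2)]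
    exact P.prop.2.2.2.2
  · apply Subtype.ext
    show Finset.univ.image _ = P.val
    apply Finset.ext
    intro p
    rw [Finset.mem_image]
    constructor
    · rintro ⟨i, -, rfl⟩
      exact (e i).prop
    · intro hp
      exact ⟨e.symm ⟨p, hp⟩, Finset.mem_univ _, by simp⟩

private noncomputable def fibEquiv (k l r : ℕ) (P : PT k l r) :
    {g : OT k l r // OTtoPT k l r g = P} ≃ (Fin r ≃ {x // x ∈ P.val}) where
  toFun := fibFwd k l r P
  invFun := fibInv k l r P
  left_inv := by
    rintro ⟨g, hg⟩
    apply Subtype.ext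
    apply Subtype.ext
    funext i
    rfl
  right_inv := by
    intro e
    apply Equiv.ext
    intro i
    apply Subtype.ext
    rfl

private lemma card_OT (k l r : ℕ) :
    Nat.card (OT k l r) = Nfund k l r * r.factorial := by
  classical
  letI : Fintype (PT k l r) := Fintype.ofFinite _
  rw [Nat.card_congr (Equiv.sigmaFiberEquiv (OTtoPT k l r)).symm, natCard_sigma]
  have hfib : ∀ P : PT k l r, Nat.card {g : OT k l r // OTtoPT k l r g = P} = r.factorial := by
    intro P
    rw [Nat.card_congr (fibEquiv k l r P)]
    have hcard : Fintype.card {x // x ∈ P.val} = r := by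
      rw [Fintype.card_coe]; exact P.prop.1
    have e₀ : Fin r ≃ {x // x ∈ P.val} :=
      (Fintype.equivOfCardEq (by rw [hcard, Fintype.card_fin])).symm.symm
    rw [Nat.card_eq_fintype_card, Fintype.card_equiv e₀, Fintype.card_fin]
  rw [Finset.sum_congr rfl (fun P _ => hfib P), Finset.sum_const, Finset.card_univ,
    smul_eq_mul, Nfund_eq_card_PT, Nat.card_eq_fintype_card]

private def Fset (k l r : ℕ) : Finset (Fin r → Fin (k + 1) × Fin (l + 1)) :=
  (Finset.univ : Finset (Fin r → Fin (k + 1) × Fin (l + 1))).filter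
    (fun f => (∀ i, 1 ≤ ((f i).1 : ℕ) ∧ 1 ≤ ((f i).2 : ℕ)) ∧
      (∑ i, ((f i).1 : ℕ)) = k ∧ (∑ i, ((f i).2 : ℕ)) = l)

private lemma sum_cards {k l r : ℕ} (g : OT k l r) :
    ∑ i : Fin r, ((g.val i).1).card = k + l := by
  have hb : Finset.univ.biUnion (fun i : Fin r => (g.val i).1) = Finset.univ := by
    rw [← Finset.sup_eq_biUnion]; exact g.prop.2.2.1
  have hcb := Finset.card_biUnion (s := (Finset.univ : Finset (Fin r)))
    (t := fun i => (g.val i).1) (fun i _ j _ hij => g.prop.2.1 i j hij)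
  rw [hb] at hcb
  simpa using hcb.symm

private lemma sum_l {k l r : ℕ} (g : OT k l r) :
    ∑ j : Fin r, (((g.val j).1).card - (g.val j).2) = l := by
  have h1 : ∑ j : Fin r, (((g.val j).1).card - (g.val j).2) + ∑ j : Fin r, (g.val j).2
      = ∑ j : Fin r, ((g.val j).1).card := by
    rw [← Finset.sum_add_distrib]
    exact Finset.sum_congr rfl fun j _ => Nat.sub_add_cancel (le_of_lt (g.prop.1 j).2)
  have h2 := sum_cards g
  have h3 := g.prop.2.2.2
  omega

private def OTtoF (k l r : ℕ) (g : OT k l r) : {f // f ∈ Fset k l r} := by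
  refine ⟨fun i => (⟨(g.val i).2, ?_⟩, ⟨((g.val i).1).card - (g.val i).2, ?_⟩), ?_⟩
  · have hle : (g.val i).2 ≤ ∑ j : Fin r, (g.val j).2 :=
      Finset.single_le_sum (f := fun j : Fin r => (g.val j).2)
        (fun j _ => Nat.zero_le _) (Finset.mem_univ i)
    rw [g.prop.2.2.2] at hle
    omega
  · have hle : ((g.val i).1).card - (g.val i).2
        ≤ ∑ j : Fin r, (((g.val j).1).card - (g.val j).2) :=
      Finset.single_le_sum (f := fun j : Fin r => ((g.val j).1).card - (g.val j).2)
        (fun j _ => Nat.zero_le _) (Finset.mem_univ i)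
    rw [sum_l g] at hle
    omega
  · simp only [Fset, Finset.mem_filter]
    refine ⟨Finset.mem_univ _, fun i => ⟨(g.prop.1 i).1, ?_⟩, ?_, ?_⟩
    · show 1 ≤ ((g.val i).1).card - (g.val i).2
      have := (g.prop.1 i).2
      omega
    · exact g.prop.2.2.2
    · exact sum_l g

private noncomputable def fib2Equiv (k l r : ℕ) (f : {f // f ∈ Fset k l r}) :
    {g : OT k l r // OTtoF k l r g = f} ≃
      {h : Fin r → Finset (Fin (k + l)) //
        (∀ i, (h i).card = ((f.val i).1 : ℕ) + ((f.val i).2 : ℕ)) ∧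
        (∀ i j, i ≠ j → Disjoint (h i) (h j)) ∧
        Finset.univ.sup h = Finset.univ} := by
  have hf := f.prop
  simp only [Fset, Finset.mem_filter] at hf
  refine { toFun := fun g => ⟨fun i => (g.val.val i).1, ?_, ?_, ?_⟩,
           invFun := fun h => ⟨⟨fun i => (h.val i, ((f.val i).1 : ℕ)), ?_, ?_, ?_, ?_⟩, ?_⟩,
           left_inv := ?_, right_inv := ?_ }
  · -- sizes
    intro i
    have hcomp := congrFun (congrArg Subtype.val g.prop) i
    have h1 : (g.val.val i).2 = ((f.val i).1 : ℕ) := congrArg (fun p => (p.1 : ℕ)) hcomp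
    have h2 : ((g.val.val i).1).card - (g.val.val i).2 = ((f.val i).2 : ℕ) :=
      congrArg (fun p => (p.2 : ℕ)) hcomp
    have h3 := (g.val.prop.1 i).2
    show ((g.val.val i).1).card = ((f.val i).1 : ℕ) + ((f.val i).2 : ℕ)
    omega
  · exact fun i j hij => g.val.prop.2.1 i j hij
  · exact g.val.prop.2.2.1
  · -- OT conds for inverse
    intro i
    refine ⟨(hf.2.1 i).1, ?_⟩
    have h2 := (hf.2.1 i).2
    have h3 := h.prop.1 i
    show ((f.val i).1 : ℕ) < (h.val i).card
    omega
  · exact fun i j hij => h.prop.2.1 i j hij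
  · exact h.prop.2.2
  · exact hf.2.2.1
  · -- OTtoF g = f
    apply Subtype.ext
    funext i
    have h3 := h.prop.1 i
    refine Prod.ext (Fin.ext rfl) (Fin.ext ?_)
    show (h.val i).card - ((f.val i).1 : ℕ) = ((f.val i).2 : ℕ)
    omega
  · -- left inverse
    rintro ⟨g, hg⟩
    apply Subtype.ext
    apply Subtype.ext
    funext i
    have hcomp := congrFun (congrArg Subtype.val hg) i
    have h1 : (g.val i).2 = ((f.val i).1 : ℕ) := congrArg (fun p => (p.1 : ℕ)) hcomp
    exact Prod.ext rfl h1.symm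
  · -- right inverse
    intro h
    apply Subtype.ext
    funext i
    rfl

private lemma card_OT_eq_sum (k l r : ℕ) :
    Nat.card (OT k l r) = ∑ f ∈ Fset k l r,
      Nat.multinomial Finset.univ (fun i : Fin r => ((f i).1 : ℕ) + ((f i).2 : ℕ)) := by
  classical
  rw [Nat.card_congr (Equiv.sigmaFiberEquiv (OTtoF k l r)).symm, natCard_sigma]
  have hfib : ∀ f : {f // f ∈ Fset k l r}, Nat.card {g : OT k l r // OTtoF k l r g = f}
      = Nat.multinomial Finset.univ
          (fun i : Fin r => ((f.val i).1 : ℕ) + ((f.val i).2 : ℕ)) := by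
    intro f
    rw [Nat.card_congr (fib2Equiv k l r f)]
    apply card_sizedPartitions
    have hf := f.prop
    simp only [Fset, Finset.mem_filter] at hf
    rw [Finset.sum_add_distrib, hf.2.2.1, hf.2.2.2]
    simp
  rw [Finset.sum_congr rfl fun f _ => hfib f]
  exact Finset.sum_coe_sort (Fset k l r)
    (fun f => Nat.multinomial Finset.univ (fun i : Fin r => ((f i).1 : ℕ) + ((f i).2 : ℕ)))

private def nn {k l r : ℕ} (f : Fin r → Fin (k + 1) × Fin (l + 1)) : ℕ → ℕ :=
  fun i => if h : i < r then ((f ⟨i, h⟩).1 : ℕ) + ((f ⟨i, h⟩).2 : ℕ) else 0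

private lemma nn_pos {k l r : ℕ} {f : Fin r → Fin (k + 1) × Fin (l + 1)}
    (hf : f ∈ Fset k l r) : ∀ i < r, 1 ≤ nn f i := by
  intro i hi
  simp only [Fset, Finset.mem_filter] at hf
  have h1 := hf.2.1 ⟨i, hi⟩
  simp only [nn, dif_pos hi]
  omega

private lemma cleanTerm_zero {k l r : ℕ} (f : Fin r → Fin (k + 1) × Fin (l + 1)) :
    cleanTerm r (nn f) 0 = Nat.multinomial Finset.univ
      (fun i : Fin r => ((f i).1 : ℕ) + ((f i).2 : ℕ)) := by
  rw [cleanTerm]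
  simp only [Finset.range_zero, Finset.prod_empty, one_mul]
  rw [Nat.multinomial, Nat.multinomial]
  congr 1
  · congr 1
    rw [← Finset.range_eq_Ico, ← Fin.sum_univ_eq_sum_range (fun i => nn f i) r]
    exact Finset.sum_congr rfl fun i _ => by simp [nn, i.isLt]
  · rw [← Finset.range_eq_Ico, ← Fin.prod_univ_eq_prod_range (fun i => (nn f i).factorial) r]
    exact Finset.prod_congr rfl fun i _ => by simp [nn, i.isLt]

private lemma sum_swap_eq (g : ℕ → ℕ) (τ : Equiv.Perm ℕ) (s s' : Finset ℕ)
    (hmem : ∀ j, j ∈ s ↔ τ j ∈ s') :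
    ∑ j ∈ s, g (τ j) = ∑ j ∈ s', g j :=
  Finset.sum_equiv τ hmem (fun _ _ => rfl)

private lemma multinomial_swap_eq (g : ℕ → ℕ) (τ : Equiv.Perm ℕ) (s s' : Finset ℕ)
    (hmem : ∀ j, j ∈ s ↔ τ j ∈ s') :
    Nat.multinomial s (fun j => g (τ j)) = Nat.multinomial s' g := by
  rw [Nat.multinomial, Nat.multinomial]
  congr 1
  · congr 1
    exact sum_swap_eq g τ s s' hmem
  · exact Finset.prod_equiv τ hmem (fun _ _ => rfl)

private lemma swap_mem_Ico_iff {t a r : ℕ} (hta : t ≤ a) (har : a < r) {i : ℕ} (hi : i ≤ t) :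
    ∀ j, j ∈ Finset.Ico i r ↔ Equiv.swap t a j ∈ Finset.Ico i r := by
  intro j
  rcases eq_or_ne j t with rfl | h1
  · rw [Equiv.swap_apply_left]
    simp only [Finset.mem_Ico]
    omega
  rcases eq_or_ne j a with rfl | h2
  · rw [Equiv.swap_apply_right]
    simp only [Finset.mem_Ico]
    omega
  · rw [Equiv.swap_apply_of_ne_of_ne h1 h2]

private lemma swap_mem_erase_iff {t a r : ℕ} (hta : t ≤ a) (har : a < r) :
    ∀ j, j ∈ (Finset.Ico t r).erase a ↔ Equiv.swap t a j ∈ (Finset.Ico t r).erase t := by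
  intro j
  rcases eq_or_ne j t with rfl | h1
  · rw [Equiv.swap_apply_left]
    simp only [Finset.mem_erase, Finset.mem_Ico]
    omega
  rcases eq_or_ne j a with rfl | h2
  · rw [Equiv.swap_apply_right]
    simp only [Finset.mem_erase, Finset.mem_Ico]
    omega
  · rw [Equiv.swap_apply_of_ne_of_ne h1 h2]
    simp only [Finset.mem_erase, Finset.mem_Ico]
    omega

private lemma nn_comp_swap {k l r : ℕ} (f : Fin r → Fin (k + 1) × Fin (l + 1)) {t a : ℕ}
    (ht : t < r) (ha : a < r) (m : ℕ) :
    nn (f ∘ Equiv.swap (⟨t, ht⟩ : Fin r) ⟨a, ha⟩) m = nn f (Equiv.swap t a m) := by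
  rcases eq_or_ne m t with rfl | h1
  · rw [Equiv.swap_apply_left]
    simp only [nn, dif_pos ht, dif_pos ha, Function.comp_apply]
    congr 2 <;> rw [Equiv.swap_apply_left]
  rcases eq_or_ne m a with rfl | h2
  · rw [Equiv.swap_apply_right]
    simp only [nn, dif_pos ht, dif_pos ha, Function.comp_apply]
    congr 2 <;> rw [Equiv.swap_apply_right]
  · rw [Equiv.swap_apply_of_ne_of_ne h1 h2]
    by_cases hm : m < r
    · simp only [nn, dif_pos hm, Function.comp_apply]
      congr 2 <;>
        rw [Equiv.swap_apply_of_ne_of_ne (Fin.ne_of_val_ne h1) (Fin.ne_of_val_ne h2)]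
    · simp only [nn, dif_neg hm]

private lemma Fset_comp_perm {k l r : ℕ} (σ : Equiv.Perm (Fin r))
    {f : Fin r → Fin (k + 1) × Fin (l + 1)} (hf : f ∈ Fset k l r) :
    (f ∘ σ) ∈ Fset k l r := by
  simp only [Fset, Finset.mem_filter] at hf ⊢
  refine ⟨Finset.mem_univ _, fun i => hf.2.1 (σ i), ?_, ?_⟩
  · exact (Equiv.sum_comp σ (fun i => ((f i).1 : ℕ))).trans hf.2.2.1
  · exact (Equiv.sum_comp σ (fun i => ((f i).2 : ℕ))).trans hf.2.2.2

private lemma G_comp_swap {k l r t a : ℕ} (ht : t < r) (hta : t ≤ a) (har : a < r)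
    (f : Fin r → Fin (k + 1) × Fin (l + 1)) :
    (∏ i ∈ Finset.range t,
        ((∑ j ∈ Finset.Ico i r, nn (f ∘ Equiv.swap (⟨t, ht⟩ : Fin r) ⟨a, har⟩) j) - 1).choose
          (nn (f ∘ Equiv.swap (⟨t, ht⟩ : Fin r) ⟨a, har⟩) i - 1)) *
      (((∑ j ∈ Finset.Ico t r, nn (f ∘ Equiv.swap (⟨t, ht⟩ : Fin r) ⟨a, har⟩) j) - 1).choose
          (nn (f ∘ Equiv.swap (⟨t, ht⟩ : Fin r) ⟨a, har⟩) a - 1) *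
        Nat.multinomial ((Finset.Ico t r).erase a)
          (nn (f ∘ Equiv.swap (⟨t, ht⟩ : Fin r) ⟨a, har⟩)))
    = cleanTerm r (nn f) (t + 1) := by
  have hnn : ∀ m, nn (f ∘ Equiv.swap (⟨t, ht⟩ : Fin r) ⟨a, har⟩) m
      = nn f (Equiv.swap t a m) := nn_comp_swap f ht har
  have hsum : ∀ i ≤ t, ∑ j ∈ Finset.Ico i r, nn (f ∘ Equiv.swap (⟨t, ht⟩ : Fin r) ⟨a, har⟩) j
      = ∑ j ∈ Finset.Ico i r, nn f j := by
    intro i hi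
    rw [Finset.sum_congr rfl (fun j _ => hnn j)]
    exact sum_swap_eq (nn f) _ _ _ (swap_mem_Ico_iff hta har hi)
  have hval : ∀ i < t, nn (f ∘ Equiv.swap (⟨t, ht⟩ : Fin r) ⟨a, har⟩) i = nn f i := by
    intro i hi
    rw [hnn i, Equiv.swap_apply_of_ne_of_ne (Nat.ne_of_lt hi)
      (Nat.ne_of_lt (lt_of_lt_of_le hi hta))]
  have haval : nn (f ∘ Equiv.swap (⟨t, ht⟩ : Fin r) ⟨a, har⟩) a = nn f t := by
    rw [hnn a, Equiv.swap_apply_right]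
  have herase : (Finset.Ico t r).erase t = Finset.Ico (t + 1) r := by
    ext x
    simp only [Finset.mem_erase, Finset.mem_Ico]
    omega
  have hmult : Nat.multinomial ((Finset.Ico t r).erase a)
      (nn (f ∘ Equiv.swap (⟨t, ht⟩ : Fin r) ⟨a, har⟩))
      = Nat.multinomial (Finset.Ico (t + 1) r) (nn f) := by
    rw [Nat.multinomial_congr (fun i _ => hnn i), ← herase]
    exact multinomial_swap_eq (nn f) _ _ _ (swap_mem_erase_iff hta har)
  rw [cleanTerm, Finset.prod_range_succ, haval, hmult, hsum t le_rfl,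
    Finset.prod_congr rfl (fun i hi => by
      rw [hsum i (le_of_lt (Finset.mem_range.1 hi)), hval i (Finset.mem_range.1 hi)])]
  ring

private lemma sum_cleanTerm_step (k l r t : ℕ) (ht : t < r) :
    ∑ f ∈ Fset k l r, cleanTerm r (nn f) t
      = (r - t) * ∑ f ∈ Fset k l r, cleanTerm r (nn f) (t + 1) := by
  have hne : (Finset.Ico t r).Nonempty := ⟨t, Finset.mem_Ico.2 ⟨le_refl t, ht⟩⟩
  have hstep1 : ∀ f ∈ Fset k l r, cleanTerm r (nn f) t
      = ∑ a ∈ Finset.Ico t r,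
          (∏ i ∈ Finset.range t,
              ((∑ j ∈ Finset.Ico i r, nn f j) - 1).choose (nn f i - 1)) *
            (((∑ j ∈ Finset.Ico t r, nn f j) - 1).choose (nn f a - 1) *
              Nat.multinomial ((Finset.Ico t r).erase a) (nn f)) := by
    intro f hf
    rw [cleanTerm,
      multinomial_pascal hne (fun i hi => nn_pos hf i (Finset.mem_Ico.1 hi).2),
      Finset.mul_sum]
  rw [Finset.sum_congr rfl hstep1, Finset.sum_comm]
  have hstep2 : ∀ a ∈ Finset.Ico t r,
      ∑ f ∈ Fset k l r,
          (∏ i ∈ Finset.range t,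
              ((∑ j ∈ Finset.Ico i r, nn f j) - 1).choose (nn f i - 1)) *
            (((∑ j ∈ Finset.Ico t r, nn f j) - 1).choose (nn f a - 1) *
              Nat.multinomial ((Finset.Ico t r).erase a) (nn f))
        = ∑ f ∈ Fset k l r, cleanTerm r (nn f) (t + 1) := by
    intro a ha
    rw [Finset.mem_Ico] at ha
    symm
    refine Finset.sum_nbij' (i := fun f => f ∘ Equiv.swap (⟨t, ht⟩ : Fin r) ⟨a, ha.2⟩)
      (j := fun f => f ∘ Equiv.swap (⟨t, ht⟩ : Fin r) ⟨a, ha.2⟩)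
      (fun f hf => Fset_comp_perm _ hf) (fun f hf => Fset_comp_perm _ hf)
      (fun f _ => ?_) (fun f _ => ?_) (fun f hf => ?_)
    · funext i
      simp [Function.comp, Equiv.swap_apply_self]
    · funext i
      simp [Function.comp, Equiv.swap_apply_self]
    · exact (G_comp_swap ht ha.1 ha.2 f).symm
  rw [Finset.sum_congr rfl hstep2, Finset.sum_const, Nat.card_Ico, smul_eq_mul]

private lemma sum_cleanTerm_factorial (k l r : ℕ) : ∀ t, t ≤ r →
    (r - t).factorial * (∑ f ∈ Fset k l r, cleanTerm r (nn f) 0)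
      = r.factorial * ∑ f ∈ Fset k l r, cleanTerm r (nn f) t := by
  intro t
  induction t with
  | zero => intro _; simp
  | succ u ih =>
    intro hu
    have hur : u < r := hu
    have h1 := ih (le_of_lt hur)
    have h2 := sum_cleanTerm_step k l r u hur
    have h3 : (r - u).factorial = (r - u) * (r - (u + 1)).factorial := by
      have : r - u = (r - (u + 1)) + 1 := by omega
      rw [this, Nat.factorial_succ, ← this]
    rw [h3, h2, mul_assoc] at h1
    have h4 : (r - u) * ((r - (u + 1)).factorial *
        (∑ f ∈ Fset k l r, cleanTerm r (nn f) 0))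
        = (r - u) * (r.factorial * ∑ f ∈ Fset k l r, cleanTerm r (nn f) (u + 1)) := by
      calc (r - u) * ((r - (u + 1)).factorial * (∑ f ∈ Fset k l r, cleanTerm r (nn f) 0))
          = r.factorial * ((r - u) * ∑ f ∈ Fset k l r, cleanTerm r (nn f) (u + 1)) := h1
        _ = (r - u) * (r.factorial * ∑ f ∈ Fset k l r, cleanTerm r (nn f) (u + 1)) := by
            ring
    exact Nat.eq_of_mul_eq_mul_left (by omega) h4

private lemma key_lemma (k l r t : ℕ) (ht : t ≤ r) :
    (r - t).factorial * Nfund k l r = ∑ f ∈ Fset k l r, compTerm r (nn f) t := by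
  have hA : Nfund k l r * r.factorial = ∑ f ∈ Fset k l r, cleanTerm r (nn f) 0 := by
    rw [← card_OT, card_OT_eq_sum]
    exact (Finset.sum_congr rfl fun f _ => cleanTerm_zero f).symm
  have hB := sum_cleanTerm_factorial k l r t ht
  have hC : ∑ f ∈ Fset k l r, compTerm r (nn f) t
      = ∑ f ∈ Fset k l r, cleanTerm r (nn f) t :=
    Finset.sum_congr rfl fun f hf =>
      compTerm_eq_cleanTerm r t (nn f) (fun i hi => nn_pos hf i hi) ht
  apply Nat.eq_of_mul_eq_mul_left (Nat.factorial_pos r)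
  calc r.factorial * ((r - t).factorial * Nfund k l r)
      = (r - t).factorial * (Nfund k l r * r.factorial) := by ring
    _ = (r - t).factorial * ∑ f ∈ Fset k l r, cleanTerm r (nn f) 0 := by rw [hA]
    _ = r.factorial * ∑ f ∈ Fset k l r, cleanTerm r (nn f) t := hB
    _ = r.factorial * ∑ f ∈ Fset k l r, compTerm r (nn f) t := by rw [hC]

/-- For nonpositive shifts `s ≤ 0`, the shifted multinomial `N^{(s)}_{k,l}` decomposes as
a sum over ordered compositions `(k,l) = (k₁,l₁) + … + (k_r,l_r)` with `r ≥ -s` parts and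
all `kᵢ, lᵢ ≥ 1` (encoded as functions `f : Fin r → Fin (k+1) × Fin (l+1)`), of the
product of `-s-1` shifted binomials and a shifted multinomial in the sizes
`nᵢ = kᵢ + lᵢ`. -/
theorem Nshift_binomial_decomposition (k l : ℕ) (s : ℤ)
    (hk : 1 ≤ k) (hl : 1 ≤ l) (hs : s ≤ 0) :
    Nshift k l s =
      ∑ r ∈ Finset.Icc (-s).toNat (k + l),
        ∑ f ∈ (Finset.univ : Finset (Fin r → Fin (k + 1) × Fin (l + 1))).filter
            (fun f => (∀ i, 1 ≤ ((f i).1 : ℕ) ∧ 1 ≤ ((f i).2 : ℕ)) ∧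
              (∑ i, ((f i).1 : ℕ)) = k ∧ (∑ i, ((f i).2 : ℕ)) = l),
          compTerm r
            (fun i => if h : i < r then ((f ⟨i, h⟩).1 : ℕ) + ((f ⟨i, h⟩).2 : ℕ) else 0)
            (-s).toNat := by
  obtain ⟨t, rfl⟩ : ∃ t : ℕ, s = -(t : ℤ) := ⟨(-s).toNat, by omega⟩
  rw [show (-(-(t : ℤ))).toNat = t by omega]
  -- the inner sum is over Fset, and the function is nn f
  have hinner : ∀ r : ℕ,
      (∑ f ∈ (Finset.univ : Finset (Fin r → Fin (k + 1) × Fin (l + 1))).filter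
            (fun f => (∀ i, 1 ≤ ((f i).1 : ℕ) ∧ 1 ≤ ((f i).2 : ℕ)) ∧
              (∑ i, ((f i).1 : ℕ)) = k ∧ (∑ i, ((f i).2 : ℕ)) = l),
          compTerm r
            (fun i => if h : i < r then ((f ⟨i, h⟩).1 : ℕ) + ((f ⟨i, h⟩).2 : ℕ) else 0) t)
      = ∑ f ∈ Fset k l r, compTerm r (nn f) t := fun r => rfl
  rw [Nshift]
  have hR : (∑ r ∈ Finset.Icc t (k + l),
      ∑ f ∈ (Finset.univ : Finset (Fin r → Fin (k + 1) × Fin (l + 1))).filter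
          (fun f => (∀ i, 1 ≤ ((f i).1 : ℕ) ∧ 1 ≤ ((f i).2 : ℕ)) ∧
            (∑ i, ((f i).1 : ℕ)) = k ∧ (∑ i, ((f i).2 : ℕ)) = l),
        compTerm r
          (fun i => if h : i < r then ((f ⟨i, h⟩).1 : ℕ) + ((f ⟨i, h⟩).2 : ℕ) else 0) t)
      = ∑ r ∈ Finset.Icc t (k + l), ∑ f ∈ Fset k l r, compTerm r (nn f) t :=
    Finset.sum_congr rfl fun r _ => hinner r
  rw [hR]
  clear hinner hR
  calc ∑ r ∈ Finset.Icc 1 (k + l),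
        (if 0 ≤ (r : ℤ) + -(t : ℤ) then ((r : ℤ) + -(t : ℤ)).toNat.factorial else 0) *
          Nfund k l r
      = ∑ r ∈ Finset.Icc 1 (k + l),
          (if t ≤ r then ∑ f ∈ Fset k l r, compTerm r (nn f) t else 0) := by
        refine Finset.sum_congr rfl ?_
        intro r hr
        by_cases htr : t ≤ r
        · have h0 : (0 : ℤ) ≤ (r : ℤ) + -(t : ℤ) := by omega
          have h1 : ((r : ℤ) + -(t : ℤ)).toNat = r - t := by omega
          rw [if_pos htr, if_pos h0, h1]
          exact key_lemma k l r t htr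
        · have h0 : ¬ (0 : ℤ) ≤ (r : ℤ) + -(t : ℤ) := by omega
          rw [if_neg htr, if_neg h0, zero_mul]
    _ = ∑ r ∈ Finset.Icc t (k + l), ∑ f ∈ Fset k l r, compTerm r (nn f) t := by
        by_cases ht0 : t = 0
        · rw [ht0]
          have hF0 : Fset k l 0 = ∅ := by
            rw [Finset.eq_empty_iff_forall_notMem]
            intro f hf
            simp only [Fset, Finset.mem_filter] at hf
            have h1 := hf.2.2.1
            simp only [Finset.univ_eq_empty, Finset.sum_empty] at h1
            omega
          have hicc : Finset.Icc 0 (k + l) = insert 0 (Finset.Icc 1 (k + l)) := by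
            ext x
            simp only [Finset.mem_Icc, Finset.mem_insert]
            omega
          rw [hicc, Finset.sum_insert (by simp), hF0, Finset.sum_empty, zero_add]
          refine Finset.sum_congr rfl ?_
          intro r hr
          rw [if_pos (Nat.zero_le r)]
        · rw [← Finset.sum_filter]
          apply Finset.sum_congr ?_ fun r _ => rfl
          ext x
          simp only [Finset.mem_filter, Finset.mem_Icc]
          omega
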